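/- Let (ξ_i, F_i)_{i=1,...,n} be supermartingale differences with ξ_i ≤ 1 a.s. Then for all x ≥ 0 and v > 0, P(X_k ≥ x/3 + v√(2x) and ⟨X⟩_k ≤ v² for some k ∈ [1,n]) ≤ e^{−x}. -/

import Mathlib

open MeasureTheory Real Finset


lemma bfs_exp_tsum (y : ℝ) : Real.exp y = ∑' n : ℕ, y ^ n / n.factorial := by
  rw [Real.exp_eq_exp_ℝ, NormedSpace.exp_eq_tsum_div]

lemma bfs_summable_shift (a : ℝ) (m : ℕ) :
    Summable (fun n : ℕ => a ^ (n+m) / (n+m).factorial) :=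
  (Real.summable_pow_div_factorial a).comp_injective (add_left_injective m)

lemma bfs_exp_sub_id_sub_one (a : ℝ) :
    Real.exp a - a - 1 = ∑' n : ℕ, a ^ (n+2) / (n+2).factorial := by
  have hs : Summable (fun n : ℕ => a ^ n / n.factorial) := Real.summable_pow_div_factorial a
  have h1 : (fun n : ℕ => a ^ (n+1) / (n+1).factorial) = (fun n : ℕ => a ^ n / n.factorial) ∘ (· + 1) := rfl
  have h2 : (fun n : ℕ => a ^ (n+2) / (n+2).factorial) = (fun n : ℕ => a ^ (n+1) / (n+1).factorial) ∘ (· + 1) := by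
    funext n; simp [Function.comp]
  rw [bfs_exp_tsum, Summable.tsum_eq_zero_add hs, Summable.tsum_eq_zero_add (bfs_summable_shift a 1)]
  rw [h2]
  simp [Nat.factorial]
  ring

lemma bfs_factorial_ge (n : ℕ) : (2 * 3 ^ n : ℝ) ≤ (n+2).factorial := by
  induction n with
  | zero => norm_num [Nat.factorial]
  | succ k ih =>
    have h3 : (3:ℝ) ≤ (k+3 : ℕ) := by push_cast; linarith
    calc (2 * 3 ^ (k+1) : ℝ) = 3 * (2 * 3 ^ k) := by ring
    _ ≤ (k+3 : ℕ) * (k+2).factorial := by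
        apply mul_le_mul h3 ih (by positivity) (by positivity)
    _ = ((k+1)+2).factorial := by
        have h := Nat.factorial_succ (k+2)
        rw [show (k+1)+2 = (k+2)+1 by ring, h, Nat.cast_mul]

-- Lemma A
lemma bfs_lemA {a : ℝ} (ha : 0 ≤ a) (ha3 : a < 3) :
    Real.exp a - a - 1 ≤ a^2 / (2 * (1 - a/3)) := by
  have hr : 0 ≤ a/3 := by linarith
  have hr1 : a/3 < 1 := by linarith
  have hgeo : Summable (fun n : ℕ => a^2/2 * (a/3)^n) :=
    (summable_geometric_of_lt_one hr hr1).mul_left _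
  have hterm : ∀ n : ℕ, a ^ (n+2) / (n+2).factorial ≤ a^2/2 * (a/3)^n := by
    intro n
    have hf : (2 * 3 ^ n : ℝ) ≤ (n+2).factorial := bfs_factorial_ge n
    have hfpos : (0:ℝ) < 2 * 3 ^ n := by positivity
    have : a ^ (n+2) / (n+2).factorial ≤ a ^ (n+2) / (2 * 3 ^ n) :=
      div_le_div_of_nonneg_left (by positivity) hfpos hf
    refine this.trans (le_of_eq ?_)
    rw [pow_add, div_pow]
    field_simp
  calc Real.exp a - a - 1 = ∑' n : ℕ, a ^ (n+2) / (n+2).factorial := bfs_exp_sub_id_sub_one a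
  _ ≤ ∑' n : ℕ, a^2/2 * (a/3)^n := Summable.tsum_le_tsum hterm (bfs_summable_shift a 2) hgeo
  _ = a^2/2 * (1 - a/3)⁻¹ := by rw [tsum_mul_left, tsum_geometric_of_lt_one hr hr1]
  _ = a^2 / (2 * (1 - a/3)) := by field_simp

-- exp s ≤ 1 + s + s^2/2 for s ≤ 0
lemma bfs_exp_le_quadratic {s : ℝ} (hs : s ≤ 0) : Real.exp s ≤ 1 + s + s^2/2 := by
  have hmono : AntitoneOn (fun t : ℝ => 1 + t + t^2/2 - Real.exp t) (Set.Iic 0) := by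
    apply antitoneOn_of_deriv_nonpos (convex_Iic 0)
    · fun_prop
    · apply Differentiable.differentiableOn; fun_prop
    · intro t ht
      rw [show (fun t : ℝ => 1 + t + t^2/2 - Real.exp t) = ((((fun _ => (1:ℝ)) + fun x => x) + fun x => x ^ 2 / 2) - Real.exp) from rfl]
      rw [((((hasDerivAt_const t (1:ℝ)).add (hasDerivAt_id' t)).add
        ((hasDerivAt_pow 2 t).div_const 2)).sub (Real.hasDerivAt_exp t)).deriv]
      have := Real.add_one_le_exp t
      norm_num
      nlinarith
  have := hmono (Set.mem_Iic.2 hs) (Set.mem_Iic.2 le_rfl) hs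
  norm_num [Real.exp_zero] at this
  linarith

-- Lemma B
lemma bfs_lemB {a t : ℝ} (ha : 0 ≤ a) (ht : t ≤ 1) :
    Real.exp (a*t) ≤ 1 + a*t + (Real.exp a - a - 1) * t^2 := by
  have hphi : a^2/2 ≤ Real.exp a - a - 1 := by
    have := Real.quadratic_le_exp_of_nonneg ha; linarith
  rcases le_or_gt t 0 with ht0 | ht0
  · have h1 : Real.exp (a*t) ≤ 1 + a*t + (a*t)^2/2 :=
      bfs_exp_le_quadratic (mul_nonpos_of_nonneg_of_nonpos ha ht0)
    nlinarith [sq_nonneg t]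
  · have ht0' : 0 ≤ t := ht0.le
    have key : Real.exp (a*t) - a*t - 1 ≤ (Real.exp a - a - 1) * t^2 := by
      rw [bfs_exp_sub_id_sub_one (a*t), bfs_exp_sub_id_sub_one a, ← tsum_mul_right]
      refine Summable.tsum_le_tsum (fun n => ?_) (bfs_summable_shift (a*t) 2)
        ((bfs_summable_shift a 2).mul_right _)
      have htp : t ^ (n+2) ≤ t^2 := pow_le_pow_of_le_one ht0' ht (by omega)
      have : (a*t)^(n+2) = a^(n+2) * t^(n+2) := mul_pow a t (n+2)
      rw [this]
      have hfpos : (0:ℝ) < (n+2).factorial := by positivity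
      rw [div_mul_eq_mul_div]
      gcongr
    linarith

lemma bfs_choice {x v : ℝ} (hx : 0 < x) (hv : 0 < v) :
    ∃ l : ℝ, 0 ≤ l ∧ x ≤ l * (x/3 + v * Real.sqrt (2*x)) - (Real.exp l - l - 1) * v^2 := by
  set s := Real.sqrt (2*x) with hs_def
  have hs : 0 < s := Real.sqrt_pos.2 (by linarith)
  have hs2 : s^2 = 2*x := Real.sq_sqrt (by linarith)
  set w := v + s/3 with hw_def
  have hw : 0 < w := by positivity
  refine ⟨s/w, by positivity, ?_⟩
  have hl3 : s/w < 3 := by rw [div_lt_iff₀ hw]; simp only [hw_def]; linarith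
  have hA := bfs_lemA (a := s/w) (by positivity) hl3
  have h13 : 1 - (s/w)/3 = v/w := by field_simp; ring
  rw [h13] at hA
  have hxval : x = s^2/2 := by linarith
  have key : (s/w) * (x/3 + v * s) - ((s/w)^2/(2*(v/w))) * v^2 = x := by
    rw [hxval, hw_def]
    field_simp
    ring
  nlinarith [mul_le_mul_of_nonneg_right hA (sq_nonneg v), sq_nonneg v, hv]


theorem bennett_form_supermartingale {Ω : Type*} [m : MeasurableSpace Ω] (μ : Measure Ω)
    [IsProbabilityMeasure μ] (n : ℕ) (ℱ : ℕ → MeasurableSpace Ω)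
    (hmono : Monotone ℱ) (hle : ∀ i, ℱ i ≤ m)
    (ξ : ℕ → Ω → ℝ)
    (hadapt : ∀ i, 1 ≤ i → i ≤ n → Measurable[ℱ i] (ξ i))
    (hint : ∀ i, 1 ≤ i → i ≤ n → Integrable (ξ i) μ)
    (hint2 : ∀ i, 1 ≤ i → i ≤ n → Integrable (fun ω => (ξ i ω)^2) μ)
    (hsuper : ∀ i, 1 ≤ i → i ≤ n → ∀ᵐ ω ∂μ, (μ[ξ i | ℱ (i-1)]) ω ≤ 0)
    (hbound : ∀ i, 1 ≤ i → i ≤ n → ∀ᵐ ω ∂μ, ξ i ω ≤ 1)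
    (x v : ℝ) (hx : 0 ≤ x) (hv : 0 < v) :
    μ {ω | ∃ k, 1 ≤ k ∧ k ≤ n ∧
          x/3 + v * Real.sqrt (2*x) ≤ ∑ i ∈ Finset.Icc 1 k, ξ i ω ∧
          ∑ i ∈ Finset.Icc 1 k, (μ[fun ω' => (ξ i ω')^2 | ℱ (i-1)]) ω ≤ v^2}
      ≤ ENNReal.ofReal (Real.exp (-x)) := by
  rcases eq_or_lt_of_le hx with hx0 | hx0
  · -- x = 0 : trivial since μ is a probability measure
    rw [← hx0]
    simp only [neg_zero, Real.exp_zero, ENNReal.ofReal_one]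
    exact prob_le_one
  -- now 0 < x
  obtain ⟨l, hl0, hkey⟩ := bfs_choice hx0 hv
  set t : ℝ := x/3 + v * Real.sqrt (2*x) with ht_def
  set φ : ℝ := Real.exp l - l - 1 with hφ_def
  have hφ0 : 0 ≤ φ := by
    have := Real.add_one_le_exp l; rw [hφ_def]; linarith
  set c : ℕ → Ω → ℝ := fun i => μ[fun ω' => (ξ i ω')^2 | ℱ (i-1)] with hc_def
  set S : ℕ → Ω → ℝ := fun k ω => ∑ i ∈ Finset.Icc 1 k, ξ i ω with hS_def
  set V : ℕ → Ω → ℝ := fun k ω => ∑ i ∈ Finset.Icc 1 k, c i ω with hV_def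
  set Z : ℕ → Ω → ℝ := fun k ω => Real.exp (l * S k ω - φ * V k ω) with hZ_def
  -- measurability
  have hSmeas : ∀ k, k ≤ n → Measurable[ℱ k] (S k) := by
    intro k hk
    apply Finset.measurable_sum
    intro i hi
    rw [Finset.mem_Icc] at hi
    exact (hadapt i hi.1 (hi.2.trans hk)).mono (hmono hi.2) le_rfl
  have hcmeas : ∀ i, Measurable[ℱ (i-1)] (c i) := fun i =>
    (stronglyMeasurable_condExp (m := ℱ (i-1))).measurable
  have hVmeas : ∀ k, Measurable[ℱ (k-1)] (V k) := by
    intro k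
    apply Finset.measurable_sum
    intro i hi
    rw [Finset.mem_Icc] at hi
    exact (hcmeas i).mono (hmono (Nat.sub_le_sub_right hi.2 1)) le_rfl
  have hZmeas : ∀ k, k ≤ n → Measurable[ℱ k] (Z k) := by
    intro k hk
    apply Real.measurable_exp.comp
    exact (((hSmeas k hk).const_mul l).sub
      (((hVmeas k).mono (hmono (Nat.sub_le k 1)) le_rfl).const_mul φ))
  -- a.e. facts
  have hae1 : ∀ᵐ ω ∂μ, ∀ i, 1 ≤ i → i ≤ n → ξ i ω ≤ 1 := by
    rw [ae_all_iff]
    intro i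
    by_cases hi : 1 ≤ i ∧ i ≤ n
    · filter_upwards [hbound i hi.1 hi.2] with ω hω _ _; exact hω
    · filter_upwards with ω h1 h2; exact absurd ⟨h1, h2⟩ hi
  have hae2 : ∀ᵐ ω ∂μ, ∀ i, 0 ≤ c i ω := by
    rw [ae_all_iff]
    intro i
    exact condExp_nonneg (Filter.Eventually.of_forall fun ω' => sq_nonneg _)
  have hae : ∀ᵐ ω ∂μ, (∀ i, 1 ≤ i → i ≤ n → ξ i ω ≤ 1) ∧ (∀ i, 0 ≤ c i ω) := hae1.and hae2
  have hSbd : ∀ᵐ ω ∂μ, ∀ k, k ≤ n → S k ω ≤ k := by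
    filter_upwards [hae] with ω hω k hk
    calc S k ω ≤ ∑ i ∈ Finset.Icc 1 k, (1:ℝ) := by
          apply Finset.sum_le_sum
          intro i hi
          rw [Finset.mem_Icc] at hi
          exact hω.1 i hi.1 (hi.2.trans hk)
    _ = k := by simp [Nat.Icc_eq_range', Finset.sum_const]
  have hVnn : ∀ᵐ ω ∂μ, ∀ k, 0 ≤ V k ω := by
    filter_upwards [hae] with ω hω k
    exact Finset.sum_nonneg fun i _ => hω.2 i
  have hZbd : ∀ᵐ ω ∂μ, ∀ k, k ≤ n → Z k ω ≤ Real.exp (l * k) := by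
    filter_upwards [hSbd, hVnn] with ω h1 h2 k hk
    apply Real.exp_le_exp.2
    have := h1 k hk
    have := h2 k
    nlinarith
  have hZint : ∀ k, k ≤ n → Integrable (Z k) μ := by
    intro k hk
    refine Integrable.mono' (integrable_const (Real.exp (l * k)))
      ((hZmeas k hk).mono (hle k) le_rfl).aestronglyMeasurable ?_
    filter_upwards [hZbd] with ω hω
    rw [Real.norm_eq_abs, abs_of_pos (Real.exp_pos _)]
    exact hω k hk
  -- the supermartingale step
  have hstep : ∀ k, 1 ≤ k → k ≤ n → ∀ B : Set Ω, MeasurableSet[ℱ (k-1)] B →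
      ∫ ω in B, Z k ω ∂μ ≤ ∫ ω in B, Z (k-1) ω ∂μ := by
    intro k hk1 hkn B hB
    obtain ⟨j, rfl⟩ : ∃ j, k = j + 1 := ⟨k - 1, (Nat.succ_pred_eq_of_pos hk1).symm⟩
    simp only [Nat.add_sub_cancel] at hB ⊢
    have hjn : j ≤ n := by omega
    set W : Ω → ℝ := fun ω => Real.exp (l * S j ω - φ * V (j+1) ω) with hW_def
    set g : Ω → ℝ := fun ω => Real.exp (l * ξ (j+1) ω) with hg_def
    have hSsplit : ∀ ω, S (j+1) ω = S j ω + ξ (j+1) ω := by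
      intro ω
      rw [hS_def]
      exact Finset.sum_Icc_succ_top (Nat.one_le_iff_ne_zero.2 (Nat.succ_ne_zero j)) _
    have hVsplit : ∀ ω, V (j+1) ω = V j ω + c (j+1) ω := by
      intro ω
      rw [hV_def]
      exact Finset.sum_Icc_succ_top (Nat.one_le_iff_ne_zero.2 (Nat.succ_ne_zero j)) _
    have hZeq : Z (j+1) = W * g := by
      funext ω
      simp only [Pi.mul_apply, hW_def, hg_def, hZ_def, ← Real.exp_add]
      rw [hSsplit ω]
      ring_nf
    have hWmeas : Measurable[ℱ j] W := by
      apply Real.measurable_exp.comp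
      refine ((hSmeas j hjn).const_mul l).sub ?_
      have : Measurable[ℱ j] (V (j+1)) := hVmeas (j+1)
      exact this.const_mul φ
    have hWbd : ∀ᵐ ω ∂μ, ‖W ω‖ ≤ Real.exp (l * j) := by
      filter_upwards [hSbd, hVnn] with ω h1 h2
      rw [Real.norm_eq_abs, abs_of_pos (Real.exp_pos _)]
      apply Real.exp_le_exp.2
      have := h1 j hjn
      have := h2 (j+1)
      nlinarith
    have hgmeas : Measurable g := by
      apply Real.measurable_exp.comp
      exact (((hadapt (j+1) (by omega) hkn).mono le_rfl le_rfl).mono (hle (j+1)) le_rfl).const_mul l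
    have hgbd : ∀ᵐ ω ∂μ, ‖g ω‖ ≤ Real.exp l := by
      filter_upwards [hbound (j+1) (by omega) hkn] with ω hω
      rw [Real.norm_eq_abs, abs_of_pos (Real.exp_pos _)]
      apply Real.exp_le_exp.2
      nlinarith
    have hgint : Integrable g μ :=
      Integrable.mono' (integrable_const (Real.exp l)) hgmeas.aestronglyMeasurable hgbd
    have hWgint : Integrable (W * g) μ := by
      refine Integrable.mono' (integrable_const (Real.exp (l * j) * Real.exp l))
        ((hWmeas.mono (hle j) le_rfl).mul hgmeas).aestronglyMeasurable ?_
      filter_upwards [hWbd, hgbd] with ω h1 h2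
      rw [Pi.mul_apply, norm_mul]
      exact mul_le_mul h1 h2 (norm_nonneg _) (Real.exp_pos _).le
    -- conditional expectation bound
    have hgle : g ≤ᵐ[μ] fun ω => 1 + l * ξ (j+1) ω + φ * (ξ (j+1) ω)^2 := by
      filter_upwards [hbound (j+1) (by omega) hkn] with ω hω
      have := bfs_lemB hl0 hω
      rw [hg_def]
      calc Real.exp (l * ξ (j+1) ω) ≤ 1 + l * ξ (j+1) ω + (Real.exp l - l - 1) * (ξ (j+1) ω)^2 :=
        bfs_lemB hl0 hω
      _ = 1 + l * ξ (j+1) ω + φ * (ξ (j+1) ω)^2 := by rw [hφ_def]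
    have hrhs_int : Integrable (fun ω => 1 + l * ξ (j+1) ω + φ * (ξ (j+1) ω)^2) μ := by
      exact ((integrable_const (1:ℝ)).add ((hint (j+1) (by omega) hkn).const_mul l)).add
        ((hint2 (j+1) (by omega) hkn).const_mul φ)
    have hcond1 : μ[g | ℱ j] ≤ᵐ[μ] μ[fun ω => 1 + l * ξ (j+1) ω + φ * (ξ (j+1) ω)^2 | ℱ j] :=
      condExp_mono hgint hrhs_int hgle
    have hcond2 : (μ[fun ω => 1 + l * ξ (j+1) ω + φ * (ξ (j+1) ω)^2 | ℱ j]) =ᵐ[μ]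
        fun ω => 1 + l * (μ[ξ (j+1) | ℱ j]) ω + φ * c (j+1) ω := by
      have heq : (fun ω => 1 + l * ξ (j+1) ω + φ * (ξ (j+1) ω)^2)
          = (fun _ => (1:ℝ)) + (l • ξ (j+1) + φ • fun ω => (ξ (j+1) ω)^2) := by
        funext ω; simp [Pi.add_apply]; ring
      rw [heq]
      refine (condExp_add (m := ℱ j) (integrable_const 1)
        (((hint (j+1) (by omega) hkn).smul l).add ((hint2 (j+1) (by omega) hkn).smul φ))).trans ?_
      have h1 : μ[(fun _ => (1:ℝ)) | ℱ j] = fun _ => (1:ℝ) := condExp_const (hle j) 1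
      have h2 := condExp_add (μ := μ) (m := ℱ j) ((hint (j+1) (by omega) hkn).smul l)
        ((hint2 (j+1) (by omega) hkn).smul φ)
      have h3 := condExp_smul (μ := μ) (m := ℱ j) l (ξ (j+1))
      have h4 := condExp_smul (μ := μ) (m := ℱ j) φ (fun ω => (ξ (j+1) ω)^2)
      filter_upwards [h2, h3, h4] with ω h2 h3 h4
      simp only [h2, Pi.add_apply, h3, h4, h1, Pi.smul_apply, smul_eq_mul, hc_def,
        Nat.add_sub_cancel]
      ring
    have hcond3 : μ[g | ℱ j] ≤ᵐ[μ] fun ω => Real.exp (φ * c (j+1) ω) := by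
      filter_upwards [hcond1, hcond2, hsuper (j+1) (by omega) hkn, hae] with ω h1 h2 h3 h4
      have hsup : (μ[ξ (j+1) | ℱ ((j+1)-1)]) ω ≤ 0 := h3
      simp only [Nat.add_sub_cancel] at hsup
      have : (μ[g | ℱ j]) ω ≤ 1 + φ * c (j+1) ω := by
        rw [h2] at h1
        nlinarith
      refine this.trans ?_
      have := Real.add_one_le_exp (φ * c (j+1) ω)
      linarith
    -- pull-out and combine
    have hpull : μ[W * g | ℱ j] =ᵐ[μ] W * μ[g | ℱ j] :=
      condExp_stronglyMeasurable_mul_of_bound (hle j) hWmeas.stronglyMeasurable hgint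
        (Real.exp (l * j)) hWbd
    have hfinal : μ[W * g | ℱ j] ≤ᵐ[μ] Z j := by
      filter_upwards [hpull, hcond3] with ω h1 h2
      rw [h1, Pi.mul_apply]
      have hWpos : 0 < W ω := Real.exp_pos _
      calc W ω * (μ[g | ℱ j]) ω ≤ W ω * Real.exp (φ * c (j+1) ω) :=
        mul_le_mul_of_nonneg_left h2 hWpos.le
      _ = Z j ω := by
          simp only [hW_def, hZ_def, ← Real.exp_add]
          rw [hVsplit ω]
          ring_nf
    calc ∫ ω in B, Z (j+1) ω ∂μ = ∫ ω in B, (W * g) ω ∂μ := by rw [hZeq]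
    _ = ∫ ω in B, (μ[W * g | ℱ j]) ω ∂μ := (setIntegral_condExp (hle j) hWgint hB).symm
    _ ≤ ∫ ω in B, Z j ω ∂μ :=
        setIntegral_mono_ae integrable_condExp.integrableOn (hZint j hjn).integrableOn hfinal
  -- events
  classical
  set E : ℕ → Set Ω := fun k => {ω | t ≤ S k ω ∧ V k ω ≤ v^2} with hE_def
  set D : ℕ → Set Ω := fun M => ⋃ k ∈ Finset.Icc 1 M, E k with hD_def
  have hEmeas : ∀ k, k ≤ n → MeasurableSet[ℱ k] (E k) := by
    intro k hk
    have h1 : MeasurableSet[ℱ k] {ω | t ≤ S k ω} :=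
      measurableSet_le measurable_const (hSmeas k hk)
    have h2 : MeasurableSet[ℱ k] {ω | V k ω ≤ v^2} :=
      measurableSet_le ((hVmeas k).mono (hmono (Nat.sub_le k 1)) le_rfl) measurable_const
    exact h1.inter h2
  have hDmeas : ∀ M, M ≤ n → MeasurableSet[ℱ M] (D M) := by
    intro M hM
    apply Finset.measurableSet_biUnion
    intro k hk
    rw [Finset.mem_Icc] at hk
    exact hmono hk.2 _ (hEmeas k (hk.2.trans hM))
  have hDsucc : ∀ M, D (M+1) = D M ∪ E (M+1) := by
    intro M
    simp only [hD_def]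
    ext ω
    simp only [Set.mem_iUnion, exists_prop, Finset.mem_Icc, Set.mem_union]
    constructor
    · rintro ⟨k, ⟨h1, h2⟩, hk⟩
      rcases eq_or_lt_of_le h2 with rfl | h
      · exact Or.inr hk
      · exact Or.inl ⟨k, ⟨h1, by omega⟩, hk⟩
    · rintro (⟨k, ⟨h1, h2⟩, hk⟩ | hk)
      · exact ⟨k, ⟨h1, by omega⟩, hk⟩
      · exact ⟨M+1, ⟨by omega, le_rfl⟩, hk⟩
  -- the optional-stopping induction
  have hind : ∀ M, M ≤ n →
      (∑ k ∈ Finset.Icc 1 M, ∫ ω in E k \ D (k-1), Z k ω ∂μ)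
        + ∫ ω in (D M)ᶜ, Z M ω ∂μ ≤ 1 := by
    intro M
    induction M with
    | zero =>
      intro _
      have hD0 : D 0 = ∅ := by
        simp only [hD_def]
        rw [show Finset.Icc 1 0 = (∅ : Finset ℕ) from Finset.Icc_eq_empty (by omega)]
        simp
      have hZ0 : Z 0 = fun _ => (1:ℝ) := by
        funext ω; simp [hZ_def, hS_def, hV_def]
      rw [show Finset.Icc 1 0 = (∅ : Finset ℕ) from Finset.Icc_eq_empty (by omega),
        Finset.sum_empty, hD0, Set.compl_empty, Measure.restrict_univ, hZ0, zero_add,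
        integral_const]
      simp
    | succ j ih =>
      intro hj1
      have hjn : j ≤ n := by omega
      have hsetdj : D ((j+1)-1) = D j := by rw [Nat.add_sub_cancel]
      have hseteq : (E (j+1) \ D j) ∪ (D (j+1))ᶜ = (D j)ᶜ := by
        rw [hDsucc j]; ext ω
        simp only [Set.mem_union, Set.mem_diff, Set.mem_compl_iff, Set.mem_union]
        tauto
      have hdisj : Disjoint (E (j+1) \ D j) ((D (j+1))ᶜ) := by
        rw [hDsucc j]
        refine Set.disjoint_left.2 fun ω hω hω2 => ?_
        simp only [Set.mem_compl_iff, Set.mem_union] at hω2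
        push_neg at hω2
        exact hω2.2 hω.1
      have hBmeas : MeasurableSet[ℱ ((j+1)-1)] ((D j)ᶜ) := by
        rw [Nat.add_sub_cancel]; exact (hDmeas j hjn).compl
      have hstep' := hstep (j+1) (by omega) hj1 ((D j)ᶜ) hBmeas
      rw [Nat.add_sub_cancel] at hstep'
      have hunion : (∫ ω in E (j+1) \ D j, Z (j+1) ω ∂μ) + ∫ ω in (D (j+1))ᶜ, Z (j+1) ω ∂μ
          = ∫ ω in (D j)ᶜ, Z (j+1) ω ∂μ := by
        rw [← hseteq]
        exact (setIntegral_union hdisj ((hle _ _ (hDmeas (j+1) hj1)).compl)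
          ((hZint (j+1) hj1).integrableOn) ((hZint (j+1) hj1).integrableOn)).symm
      calc (∑ k ∈ Finset.Icc 1 (j+1), ∫ ω in E k \ D (k-1), Z k ω ∂μ)
            + ∫ ω in (D (j+1))ᶜ, Z (j+1) ω ∂μ
          = (∑ k ∈ Finset.Icc 1 j, ∫ ω in E k \ D (k-1), Z k ω ∂μ)
            + ((∫ ω in E (j+1) \ D j, Z (j+1) ω ∂μ)
              + ∫ ω in (D (j+1))ᶜ, Z (j+1) ω ∂μ) := by
            rw [Finset.sum_Icc_succ_top (by omega : 1 ≤ j + 1), hsetdj]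
            ring
      _ = (∑ k ∈ Finset.Icc 1 j, ∫ ω in E k \ D (k-1), Z k ω ∂μ)
            + ∫ ω in (D j)ᶜ, Z (j+1) ω ∂μ := by rw [hunion]
      _ ≤ (∑ k ∈ Finset.Icc 1 j, ∫ ω in E k \ D (k-1), Z k ω ∂μ)
            + ∫ ω in (D j)ᶜ, Z j ω ∂μ := add_le_add_right hstep' _
      _ ≤ 1 := ih hjn
  -- the target set is D n
  have htarget : {ω | ∃ k, 1 ≤ k ∧ k ≤ n ∧
        x/3 + v * Real.sqrt (2*x) ≤ ∑ i ∈ Finset.Icc 1 k, ξ i ω ∧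
        ∑ i ∈ Finset.Icc 1 k, (μ[fun ω' => (ξ i ω')^2 | ℱ (i-1)]) ω ≤ v^2} = D n := by
    ext ω
    simp only [hD_def, hE_def, Set.mem_setOf_eq, Set.mem_iUnion, exists_prop, Finset.mem_Icc,
      hS_def, hV_def, hc_def, ht_def]
    constructor
    · rintro ⟨k, h1, h2, h3, h4⟩; exact ⟨k, ⟨h1, h2⟩, h3, h4⟩
    · rintro ⟨k, ⟨h1, h2⟩, h3, h4⟩; exact ⟨k, h1, h2, h3, h4⟩
  -- D n is covered by the disjoint first-hitting pieces
  have hsub : D n ⊆ ⋃ k ∈ Finset.Icc 1 n, (E k \ D (k-1)) := by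
    intro ω hω
    simp only [hD_def, Set.mem_iUnion, exists_prop] at hω
    obtain ⟨k, hk, hke⟩ := hω
    have hex : ∃ k, k ∈ Finset.Icc 1 n ∧ ω ∈ E k := ⟨k, hk, hke⟩
    obtain ⟨hk0mem, hk0E⟩ := Nat.find_spec hex
    have hk0' := Finset.mem_Icc.1 hk0mem
    refine Set.mem_biUnion hk0mem ⟨hk0E, fun hD => ?_⟩
    simp only [hD_def, Set.mem_iUnion, exists_prop] at hD
    obtain ⟨i, hi, hiE⟩ := hD
    rw [Finset.mem_Icc] at hi
    exact Nat.find_min hex (show i < Nat.find hex by omega)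
      ⟨Finset.mem_Icc.2 ⟨hi.1, by omega⟩, hiE⟩
  -- lower bound for the integral on each piece
  have hub : ∀ k ∈ Finset.Icc 1 n,
      Real.exp x * (μ (E k \ D (k-1))).toReal ≤ ∫ ω in E k \ D (k-1), Z k ω ∂μ := by
    intro k hk
    rw [Finset.mem_Icc] at hk
    have hmeasEk : MeasurableSet (E k \ D (k-1)) :=
      (hle k _ (hEmeas k hk.2)).diff
        (hle (k-1) _ (hDmeas (k-1) (le_trans (Nat.sub_le k 1) hk.2)))
    rw [mul_comm, ← smul_eq_mul]
    change μ.real (E k \ D (k-1)) • Real.exp x ≤ _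
    apply setIntegral_ge_of_const_le hmeasEk (measure_ne_top μ _) ?_
      (hZint k hk.2).integrableOn
    intro ω hω
    obtain ⟨hS, hV⟩ := hω.1
    apply Real.exp_le_exp.2
    nlinarith [hkey]
  -- put everything together
  have hsumfin : ∀ k ∈ Finset.Icc 1 n, μ (E k \ D (k-1)) ≠ ⊤ := fun k _ => measure_ne_top μ _
  have hchain : Real.exp x * (μ (D n)).toReal ≤ 1 := by
    have h1 : μ (D n) ≤ ∑ k ∈ Finset.Icc 1 n, μ (E k \ D (k-1)) :=
      (measure_mono hsub).trans (measure_biUnion_finset_le _ _)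
    have h2 : (μ (D n)).toReal ≤ ∑ k ∈ Finset.Icc 1 n, (μ (E k \ D (k-1))).toReal := by
      rw [← ENNReal.toReal_sum hsumfin]
      exact ENNReal.toReal_mono (ENNReal.sum_ne_top.2 hsumfin) h1
    have h3 : Real.exp x * (μ (D n)).toReal
        ≤ ∑ k ∈ Finset.Icc 1 n, Real.exp x * (μ (E k \ D (k-1))).toReal := by
      rw [← Finset.mul_sum]
      exact mul_le_mul_of_nonneg_left h2 (Real.exp_pos x).le
    have h4 : (∑ k ∈ Finset.Icc 1 n, Real.exp x * (μ (E k \ D (k-1))).toReal)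
        ≤ ∑ k ∈ Finset.Icc 1 n, ∫ ω in E k \ D (k-1), Z k ω ∂μ :=
      Finset.sum_le_sum hub
    have h5 := hind n le_rfl
    have h6 : 0 ≤ ∫ ω in (D n)ᶜ, Z n ω ∂μ :=
      integral_nonneg fun ω => (Real.exp_pos _).le
    linarith
  have hfin : (μ (D n)).toReal ≤ Real.exp (-x) := by
    rw [Real.exp_neg, ← one_div, le_div_iff₀ (Real.exp_pos x)]
    linarith [hchain]
  rw [htarget]
  exact (ENNReal.le_ofReal_iff_toReal_le (measure_ne_top μ _) (Real.exp_pos _).le).2 hfin
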